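/- Let (X, d_X, ν_X) be a compact metric measure space that is the Gromov–Hausdorff–Prokhorov limit of a sequence (X_n, d_{X_n}, ν_{X_n}). Then lim_{ε ↓ 0} λ_ε^X = 0 if and only if lim_{ε ↓ 0} limsup_{n → ∞} λ_ε^{X_n} = 0, where λ_ε^Z := sup_{z ∈ Z} ν_Z(B_ε(z)). -/

import Mathlib

open MeasureTheory Metric Set Filter

/-- A sequence of compact metric probability spaces converges to a limit space in the
Gromov–Hausdorff–Prokhorov sense if, for every `ε > 0`, eventually the spaces can be
isometrically embedded into a common metric space with Hausdorff distance of the images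
and Prokhorov distance of the pushforward measures both `< ε`. -/
def GHPTendsto (X : ℕ → Type) [∀ n, MetricSpace (X n)]
    [∀ n, MeasurableSpace (X n)] [∀ n, BorelSpace (X n)]
    (μ : ∀ n, Measure (X n))
    (Y : Type) [MetricSpace Y] [MeasurableSpace Y] [BorelSpace Y]
    (ν : Measure Y) : Prop :=
  ∀ ε : ℝ, 0 < ε → ∀ᶠ n in atTop,
    ∃ (Z : Type) (_ : MetricSpace Z) (_ : MeasurableSpace Z) (_ : BorelSpace Z)
      (φ : X n → Z) (ψ : Y → Z), Isometry φ ∧ Isometry ψ ∧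
      hausdorffDist (Set.range φ) (Set.range ψ) < ε ∧
      levyProkhorovDist ((μ n).map φ) (ν.map ψ) < ε

lemma nonempty_of_prob {A : Type} [MeasurableSpace A] (μ : Measure A)
    [IsProbabilityMeasure μ] : Nonempty A := by
  rcases isEmpty_or_nonempty A with h | h
  · exfalso
    have : μ Set.univ = 1 := measure_univ
    rw [Set.univ_eq_empty_iff.mpr h, measure_empty] at this
    exact zero_ne_one this
  · exact h

lemma thickening_ball_subset {Z : Type} [MetricSpace Z] (z : Z) (ε δ : ℝ) :
    Metric.thickening δ (Metric.ball z ε) ⊆ Metric.ball z (ε + δ) := by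
  intro w hw
  rw [Metric.mem_thickening_iff] at hw
  obtain ⟨v, hv, hwv⟩ := hw
  rw [Metric.mem_ball] at hv ⊢
  calc dist w z ≤ dist w v + dist v z := dist_triangle _ _ _
    _ < δ + ε := add_lt_add hwv hv
    _ = ε + δ := add_comm _ _

/-- Key comparison: if `A` and `B` embed isometrically into `Z` with Hausdorff distance of
images `< δ` and Lévy–Prokhorov distance of pushforwards `< δ`, then
`λ_ε^A ≤ λ_{ε+2δ}^B + δ`. -/
lemma lambda_le_lambda {A B Z : Type} [MetricSpace A] [CompactSpace A]
    [MeasurableSpace A] [BorelSpace A]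
    [MetricSpace B] [CompactSpace B] [MeasurableSpace B] [BorelSpace B]
    [MetricSpace Z] [MeasurableSpace Z] [BorelSpace Z]
    (μA : Measure A) [IsProbabilityMeasure μA] (μB : Measure B) [IsProbabilityMeasure μB]
    (φ : A → Z) (ψ : B → Z) (hφ : Isometry φ) (hψ : Isometry ψ)
    {δ : ℝ} (hδ : 0 < δ)
    (hH : hausdorffDist (Set.range φ) (Set.range ψ) < δ)
    (hLP : levyProkhorovDist (μA.map φ) (μB.map ψ) < δ)
    (ε : ℝ) :
    (⨆ a : A, μA (Metric.ball a ε)) ≤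
      (⨆ b : B, μB (Metric.ball b (ε + 2 * δ))) + ENNReal.ofReal δ := by
  have hA : Nonempty A := nonempty_of_prob μA
  have hB : Nonempty B := nonempty_of_prob μB
  refine iSup_le fun a => ?_
  -- Lévy–Prokhorov estimate
  have hedist : levyProkhorovEDist (μA.map φ) (μB.map ψ) < ENNReal.ofReal δ := by
    have hne := levyProkhorovEDist_ne_top (μA.map φ) (μB.map ψ)
    rw [levyProkhorovDist] at hLP
    exact (ENNReal.lt_ofReal_iff_toReal_lt hne).mpr hLP
  have h1 : μA (Metric.ball a ε) = (μA.map φ) (Metric.ball (φ a) ε) := by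
    rw [Measure.map_apply hφ.continuous.measurable measurableSet_ball,
      hφ.preimage_ball]
  have h2 : (μA.map φ) (Metric.ball (φ a) ε) ≤
      (μB.map ψ) (Metric.thickening δ (Metric.ball (φ a) ε)) + ENNReal.ofReal δ := by
    have := left_measure_le_of_levyProkhorovEDist_lt hedist
      (B := Metric.ball (φ a) ε) measurableSet_ball
    rwa [ENNReal.toReal_ofReal hδ.le] at this
  -- find a nearby point of the image of ψ
  have hfin : EMetric.hausdorffEdist (Set.range φ) (Set.range ψ) ≠ ⊤ := by
    apply Metric.hausdorffEdist_ne_top_of_nonempty_of_bounded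
      (Set.range_nonempty φ) (Set.range_nonempty ψ)
    · exact (isCompact_range hφ.continuous).isBounded
    · exact (isCompact_range hψ.continuous).isBounded
  obtain ⟨z, hz, hdz⟩ := Metric.exists_dist_lt_of_hausdorffDist_lt
    (Set.mem_range_self a) hH hfin
  obtain ⟨b, rfl⟩ := hz
  have hsub : Metric.thickening δ (Metric.ball (φ a) ε) ⊆ Metric.ball (ψ b) (ε + 2 * δ) := by
    refine (thickening_ball_subset (φ a) ε δ).trans (Metric.ball_subset_ball' ?_)
    linarith [hdz]
  have h3 : (μB.map ψ) (Metric.thickening δ (Metric.ball (φ a) ε)) ≤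
      μB (Metric.ball b (ε + 2 * δ)) := by
    calc (μB.map ψ) (Metric.thickening δ (Metric.ball (φ a) ε))
        ≤ (μB.map ψ) (Metric.ball (ψ b) (ε + 2 * δ)) := measure_mono hsub
      _ = μB (Metric.ball b (ε + 2 * δ)) := by
          rw [Measure.map_apply hψ.continuous.measurable measurableSet_ball,
            hψ.preimage_ball]
  calc μA (Metric.ball a ε) ≤ μB (Metric.ball b (ε + 2 * δ)) + ENNReal.ofReal δ := by
        rw [h1]; exact h2.trans (add_le_add h3 le_rfl)
    _ ≤ (⨆ b : B, μB (Metric.ball b (ε + 2 * δ))) + ENNReal.ofReal δ :=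
        add_le_add (le_iSup (fun b => μB (Metric.ball b (ε + 2 * δ))) b) le_rfl

/-- If `(X_n)` converges to `X` in the GHP sense, then `lim_{ε↓0} λ_ε^X = 0` if and only
if `lim_{ε↓0} limsup_n λ_ε^{X_n} = 0`. -/
theorem lambda_tendsto_zero_iff_limsup
    (X : ℕ → Type) [∀ n, MetricSpace (X n)] [∀ n, CompactSpace (X n)]
    [∀ n, MeasurableSpace (X n)] [∀ n, BorelSpace (X n)]
    (μ : ∀ n, Measure (X n)) [∀ n, IsProbabilityMeasure (μ n)]
    (Y : Type) [MetricSpace Y] [CompactSpace Y] [MeasurableSpace Y] [BorelSpace Y]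
    (ν : Measure Y) [IsProbabilityMeasure ν]
    (hconv : GHPTendsto X μ Y ν) :
    Filter.Tendsto (fun ε : ℝ => ⨆ y : Y, ν (Metric.ball y ε))
        (nhdsWithin 0 (Set.Ioi 0)) (nhds 0) ↔
      Filter.Tendsto
        (fun ε : ℝ => Filter.limsup (fun n => ⨆ x : X n, μ n (Metric.ball x ε)) atTop)
        (nhdsWithin 0 (Set.Ioi 0)) (nhds 0) := by
  set f : ℝ → ENNReal := fun ε => ⨆ y : Y, ν (Metric.ball y ε) with hf_def
  set g : ℝ → ENNReal :=
    fun ε => Filter.limsup (fun n => ⨆ x : X n, μ n (Metric.ball x ε)) atTop with hg_def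
  -- auxiliary limits
  have hdouble : Tendsto (fun ε : ℝ => 2 * ε) (nhdsWithin 0 (Set.Ioi 0))
      (nhdsWithin 0 (Set.Ioi 0)) := by
    apply tendsto_nhdsWithin_of_tendsto_nhds_of_eventually_within
    · have : Tendsto (fun ε : ℝ => 2 * ε) (nhds 0) (nhds (2 * 0)) :=
        (continuous_const.mul continuous_id).tendsto 0
      simpa using this.mono_left nhdsWithin_le_nhds
    · filter_upwards [self_mem_nhdsWithin] with ε hε
      exact mul_pos two_pos (show (0:ℝ) < ε from hε)
  have hofReal : Tendsto (fun ε : ℝ => ENNReal.ofReal (ε / 2))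
      (nhdsWithin 0 (Set.Ioi 0)) (nhds 0) := by
    have h1 : Tendsto (fun ε : ℝ => ε / 2) (nhdsWithin 0 (Set.Ioi 0)) (nhds 0) := by
      have := (tendsto_id (x := nhds (0:ℝ))).div_const 2
      simpa using this.mono_left nhdsWithin_le_nhds
    have := ENNReal.tendsto_ofReal h1
    simpa using this
  constructor
  · intro hf
    have hub : ∀ᶠ ε in nhdsWithin 0 (Set.Ioi 0), g ε ≤ f (2 * ε) + ENNReal.ofReal (ε / 2) := by
      filter_upwards [self_mem_nhdsWithin] with ε hε
      have hε' : (0:ℝ) < ε := hε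
      refine Filter.limsup_le_of_le ?_ ?_
      · isBoundedDefault
      · filter_upwards [hconv (ε / 2) (by positivity)] with n hn
        obtain ⟨Z, _, _, _, φ, ψ, hφ, hψ, hH, hLP⟩ := hn
        have key := lambda_le_lambda (δ := ε / 2) (μ n) ν φ ψ hφ hψ (by positivity) hH hLP ε
        have harith : ε + 2 * (ε / 2) = 2 * ε := by ring
        rwa [harith] at key
    have hupper : Tendsto (fun ε : ℝ => f (2 * ε) + ENNReal.ofReal (ε / 2))
        (nhdsWithin 0 (Set.Ioi 0)) (nhds 0) := by
      have h1 : Tendsto (fun ε : ℝ => f (2 * ε)) (nhdsWithin 0 (Set.Ioi 0)) (nhds 0) :=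
        hf.comp hdouble
      simpa using h1.add hofReal
    exact tendsto_of_tendsto_of_tendsto_of_le_of_le' tendsto_const_nhds hupper
      (Eventually.of_forall fun ε => zero_le) hub
  · intro hg
    have hub : ∀ᶠ ε in nhdsWithin 0 (Set.Ioi 0), f ε ≤ g (2 * ε) + ENNReal.ofReal (ε / 2) := by
      filter_upwards [self_mem_nhdsWithin] with ε hε
      have hε' : (0:ℝ) < ε := hε
      rw [← tsub_le_iff_right]
      refine Filter.le_limsup_of_frequently_le' ?_
      apply Filter.Eventually.frequently
      filter_upwards [hconv (ε / 2) (by positivity)] with n hn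
      obtain ⟨Z, _, _, _, φ, ψ, hφ, hψ, hH, hLP⟩ := hn
      have key := lambda_le_lambda (δ := ε / 2) ν (μ n) ψ φ hψ hφ (by positivity)
        (by rwa [Metric.hausdorffDist_comm] at hH)
        (by rwa [levyProkhorovDist_comm] at hLP) ε
      have harith : ε + 2 * (ε / 2) = 2 * ε := by ring
      rw [harith] at key
      exact tsub_le_iff_right.mpr key
    have hupper : Tendsto (fun ε : ℝ => g (2 * ε) + ENNReal.ofReal (ε / 2))
        (nhdsWithin 0 (Set.Ioi 0)) (nhds 0) := by
      have h1 : Tendsto (fun ε : ℝ => g (2 * ε)) (nhdsWithin 0 (Set.Ioi 0)) (nhds 0) :=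
        hg.comp hdouble
      simpa using h1.add hofReal
    exact tendsto_of_tendsto_of_tendsto_of_le_of_le' tendsto_const_nhds hupper
      (Eventually.of_forall fun ε => zero_le) hub
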